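/- For index pairs (a,b) and (c,d), the pointwise operators Λ(a,b) and Λ(c,d) on nowhere-zero complex functions satisfy [Λ(a,b), Λ(c,d)] = Λ([(a,b),(c,d)]), where the bracket of operators is [F,G](φ) = DF(φ)(G(φ)) - DG(φ)(F(φ)) (computable pointwise since Λ acts pointwise) and [(a,b),(c,d)] is the commutator in the index algebra. -/

import Mathlib

/-- The product on index pairs: `(a,b)(c,d) = (a·Re c + i·b·Im c, b·Re d + i·a·Im d)`. -/
noncomputable def idxMul (p q : ℂ × ℂ) : ℂ × ℂ :=
  (p.1 * (q.1.re : ℂ) + Complex.I * p.2 * (q.1.im : ℂ),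
   p.2 * (q.2.re : ℂ) + Complex.I * p.1 * (q.2.im : ℂ))

/-- The commutator bracket on index pairs. -/
noncomputable def idxBracket (p q : ℂ × ℂ) : ℂ × ℂ :=
  idxMul p q - idxMul q p

/-- The pointwise operator `λ_{(a,b)}(w) = ((a,b)·log w)·w`, using the principal branch
of the logarithm. -/
noncomputable def lambdaPt (a b : ℂ) (w : ℂ) : ℂ :=
  (a * (((Complex.log w).re : ℝ) : ℂ) + Complex.I * b * (((Complex.log w).im : ℝ) : ℂ)) * w

noncomputable def idxL (a b : ℂ) : ℂ →L[ℝ] ℂ :=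
  a • (Complex.ofRealCLM.comp Complex.reCLM) +
    (Complex.I * b) • (Complex.ofRealCLM.comp Complex.imCLM)

@[simp] lemma idxL_apply (a b z : ℂ) :
    idxL a b z = a * (z.re : ℂ) + Complex.I * b * (z.im : ℂ) := by
  simp [idxL, mul_assoc]

lemma lambdaPt_hasFDerivAt (a b w : ℂ) (hcut : 0 < w.re ∨ w.im ≠ 0) :
    HasFDerivAt (lambdaPt a b)
      ((idxL a b (Complex.log w)) • ContinuousLinearMap.id ℝ ℂ +
        w • ((idxL a b).comp
          (((1 : ℂ →L[ℂ] ℂ).smulRight w⁻¹).restrictScalars ℝ))) w := by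
  have hlog : HasFDerivAt Complex.log
      (((1 : ℂ →L[ℂ] ℂ).smulRight w⁻¹).restrictScalars ℝ) w :=
    (Complex.hasDerivAt_log hcut).hasFDerivAt.restrictScalars ℝ
  have hF : HasFDerivAt (fun w => idxL a b (Complex.log w))
      ((idxL a b).comp (((1 : ℂ →L[ℂ] ℂ).smulRight w⁻¹).restrictScalars ℝ)) w :=
    (idxL a b).hasFDerivAt.comp w hlog
  have := hF.mul (hasFDerivAt_id w)
  have h2 : lambdaPt a b = (fun w => idxL a b (Complex.log w)) * id := by
    funext z; simp [lambdaPt, idxL_apply]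
  rw [h2]; exact this

/-- `[Λ(a,b), Λ(c,d)] = Λ([(a,b),(c,d)])` pointwise: at any nonzero `w` off the branch cut
where `λ_{(a,b)}` and `λ_{(c,d)}` are real-Fréchet differentiable with derivatives
`Dab`, `Dcd`, one has `Dab(λ_{(c,d)}(w)) - Dcd(λ_{(a,b)}(w)) = λ_{[(a,b),(c,d)]}(w)`. -/
theorem lambdaPt_bracket (a b c d : ℂ) (w : ℂ) (hw : w ≠ 0)
    (hcut : 0 < w.re ∨ w.im ≠ 0)
    (Dab Dcd : ℂ →L[ℝ] ℂ)
    (hab : HasFDerivAt (lambdaPt a b) Dab w)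
    (hcd : HasFDerivAt (lambdaPt c d) Dcd w) :
    Dab (lambdaPt c d w) - Dcd (lambdaPt a b w) =
      lambdaPt (idxBracket (a, b) (c, d)).1 (idxBracket (a, b) (c, d)).2 w := by
  have e1 := hab.unique (lambdaPt_hasFDerivAt a b w hcut)
  have e2 := hcd.unique (lambdaPt_hasFDerivAt c d w hcut)
  subst e1 e2
  simp only [ContinuousLinearMap.add_apply, ContinuousLinearMap.smul_apply,
    ContinuousLinearMap.coe_id', id_eq, ContinuousLinearMap.coe_comp', Function.comp_apply,
    ContinuousLinearMap.coe_restrictScalars', ContinuousLinearMap.smulRight_apply,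
    ContinuousLinearMap.one_apply, smul_eq_mul, lambdaPt, idxL_apply, idxBracket, idxMul]
  simp only [mul_inv_cancel_right₀ hw, Prod.fst_sub, Prod.snd_sub,
    Complex.add_re, Complex.add_im, Complex.mul_re, Complex.mul_im,
    Complex.I_re, Complex.I_im, Complex.ofReal_re, Complex.ofReal_im]
  push_cast
  ring_nf
  simp only [Complex.I_sq]
  ring
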